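/- arXiv:1607.03430 — 3 statements merged into one kernel-verified Lean document; each statement's English description precedes it below -/
import Mathlib

section
/- Conjugate function of the Eisenberg–Noe aggregation function: for every z ∈ ℝ^d_+, sup_{x ∈ ℝ^d} ( Λ(x) − zᵀx ) = Σ_{i=1}^d ( c_i(z) )⁺, where c_i(z) = Σ_{j=0}^d ℓ_{ij}( z_j − z_i ) with the convention z₀ := 1, and r⁺ := max{r,0}. -/
open scoped ENNReal

noncomputable section

namespace EisenbergNoe

/-- Total liability `p̄ᵢ = ∑_{j=0}^d ℓ_{ij}` of institution `i` (institutions are the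
nodes `1,…,d`, encoded as `i.succ` for `i : Fin d`; node `0` is society). -/
def pbar {d : ℕ} (ℓ : Fin (d + 1) → Fin (d + 1) → ℝ) (i : Fin d) : ℝ :=
  ∑ j, ℓ i.succ j

/-- Relative liability `a_{ij} = ℓ_{ij} / p̄ᵢ` of institution `i` to node `j`. -/
def rel {d : ℕ} (ℓ : Fin (d + 1) → Fin (d + 1) → ℝ) (i : Fin d) (j : Fin (d + 1)) : ℝ :=
  ℓ i.succ j / pbar ℓ i

/-- Feasibility for the Eisenberg–Noe linear program `P(x)`:
`pᵢ ≤ xᵢ + ∑_{j=1}^d a_{ji} pⱼ` and `0 ≤ pᵢ ≤ p̄ᵢ` for all `i`. -/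
def Feasible {d : ℕ} (ℓ : Fin (d + 1) → Fin (d + 1) → ℝ) (x p : Fin d → ℝ) : Prop :=
  (∀ i, p i ≤ x i + ∑ j, rel ℓ j i.succ * p j) ∧ ∀ i, 0 ≤ p i ∧ p i ≤ pbar ℓ i

/-- The objective `∑_{i=1}^d a_{i0} pᵢ` of `P(x)` (the equity of society). -/
def obj {d : ℕ} (ℓ : Fin (d + 1) → Fin (d + 1) → ℝ) (p : Fin d → ℝ) : ℝ :=
  ∑ i, rel ℓ i 0 * p i

/-- Conjugate function of the Eisenberg–Noe aggregation function:
for `z ∈ ℝ^d_+`, `sup_x (Λ(x) − zᵀx) = ∑ᵢ (cᵢ(z))⁺` with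
`cᵢ(z) = ∑_{j=0}^d ℓ_{ij}(zⱼ − zᵢ)` and `z₀ := 1`; here `sup_x (Λ(x) − zᵀx)` is the
supremum of `∑ᵢ a_{i0} pᵢ − zᵀx` over all pairs `(x,p)` feasible for `P(x)`. -/
theorem eisenbergNoe_conjugate
    (d : ℕ) (hd : 1 ≤ d) (ℓ : Fin (d + 1) → Fin (d + 1) → ℝ)
    (hℓnn : ∀ i j, 0 ≤ ℓ i j)
    (hsoc : ∀ i : Fin d, ℓ 0 i.succ = 0)
    (hto0 : ∀ i : Fin d, 0 < ℓ i.succ 0)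
    (hself : ∀ i, ℓ i i = 0)
    (z : Fin d → ℝ) (hz : ∀ i, 0 ≤ z i) :
    (⨆ (x : Fin d → ℝ) (p : Fin d → ℝ) (_ : Feasible ℓ x p),
        ((obj ℓ p - ∑ i, z i * x i : ℝ) : EReal)) =
      ((∑ i, max (∑ j, ℓ i.succ j * ((Fin.cons (1 : ℝ) z : Fin (d + 1) → ℝ) j - z i)) 0 : ℝ) : EReal) := by
  set c : Fin d → ℝ :=
    fun i => ∑ j, ℓ i.succ j * ((Fin.cons (1 : ℝ) z : Fin (d + 1) → ℝ) j - z i) with hc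
  have hpbar : ∀ i, 0 < pbar ℓ i := by
    intro i
    apply Finset.sum_pos' (fun j _ => hℓnn i.succ j)
    exact ⟨0, Finset.mem_univ 0, hto0 i⟩
  have hrelsum : ∀ i, ∑ j, rel ℓ i j = 1 := by
    intro i
    unfold rel
    rw [← Finset.sum_div]
    exact div_self (hpbar i).ne'
  -- c i / pbar i expressed via rel
  have hcdiv : ∀ i, c i / pbar ℓ i
      = rel ℓ i 0 + (∑ j : Fin d, rel ℓ i j.succ * z j) - z i := by
    intro i
    have h1 : c i / pbar ℓ i
        = ∑ j, rel ℓ i j * ((Fin.cons (1 : ℝ) z : Fin (d + 1) → ℝ) j - z i) := by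
      rw [hc, Finset.sum_div]
      refine Finset.sum_congr rfl fun j _ => ?_
      rw [rel, div_mul_eq_mul_div]
    rw [h1]
    have h2 : ∑ j, rel ℓ i j * ((Fin.cons (1 : ℝ) z : Fin (d + 1) → ℝ) j - z i)
        = (∑ j, rel ℓ i j * (Fin.cons (1 : ℝ) z : Fin (d + 1) → ℝ) j)
          - (∑ j, rel ℓ i j) * z i := by
      rw [Finset.sum_mul, ← Finset.sum_sub_distrib]
      exact Finset.sum_congr rfl fun j _ => by ring
    rw [h2, hrelsum, one_mul, Fin.sum_univ_succ]
    simp [Fin.cons_succ, Fin.cons_zero]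
  -- key algebraic identity
  have key : ∀ p : Fin d → ℝ,
      obj ℓ p - (∑ i, z i * (p i - ∑ j, rel ℓ j i.succ * p j))
        = ∑ i, p i * (c i / pbar ℓ i) := by
    intro p
    have hswap : ∑ i, z i * ∑ j, rel ℓ j i.succ * p j
        = ∑ i, p i * ∑ j, rel ℓ i j.succ * z j := by
      simp_rw [Finset.mul_sum]
      rw [Finset.sum_comm]
      exact Finset.sum_congr rfl fun i _ => Finset.sum_congr rfl fun j _ => by ring
    simp_rw [hcdiv]
    have e1 : ∑ i, p i * (rel ℓ i 0 + (∑ j : Fin d, rel ℓ i j.succ * z j) - z i)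
        = (∑ i, rel ℓ i 0 * p i) + (∑ i, p i * ∑ j, rel ℓ i j.succ * z j)
          - ∑ i, z i * p i := by
      have : ∑ i, p i * (rel ℓ i 0 + (∑ j : Fin d, rel ℓ i j.succ * z j) - z i)
          = ∑ i, (rel ℓ i 0 * p i + p i * (∑ j : Fin d, rel ℓ i j.succ * z j)
              - z i * p i) :=
        Finset.sum_congr rfl fun i _ => by ring
      rw [this, Finset.sum_sub_distrib, Finset.sum_add_distrib]
    have e2 : ∑ i, z i * (p i - ∑ j, rel ℓ j i.succ * p j)
        = (∑ i, z i * p i) - ∑ i, z i * ∑ j, rel ℓ j i.succ * p j := by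
      rw [← Finset.sum_sub_distrib]
      exact Finset.sum_congr rfl fun i _ => by ring
    rw [e1, e2, hswap, obj]
    ring
  -- termwise bound
  have hterm : ∀ (p : Fin d → ℝ), (∀ i, 0 ≤ p i ∧ p i ≤ pbar ℓ i) →
      ∀ i, p i * (c i / pbar ℓ i) ≤ max (c i) 0 := by
    intro p hp i
    rcases le_or_gt 0 (c i) with h | h
    · have : p i * (c i / pbar ℓ i) ≤ pbar ℓ i * (c i / pbar ℓ i) :=
        mul_le_mul_of_nonneg_right (hp i).2 (div_nonneg h (hpbar i).le)
      calc p i * (c i / pbar ℓ i) ≤ pbar ℓ i * (c i / pbar ℓ i) := this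
        _ = c i := by rw [mul_comm, div_mul_cancel₀ _ (hpbar i).ne']
        _ ≤ max (c i) 0 := le_max_left _ _
    · have : p i * (c i / pbar ℓ i) ≤ 0 :=
        mul_nonpos_of_nonneg_of_nonpos (hp i).1
          (div_nonpos_of_nonpos_of_nonneg h.le (hpbar i).le)
      exact this.trans (le_max_right _ _)
  apply le_antisymm
  · refine iSup_le fun x => iSup_le fun p => iSup_le fun hf => ?_
    rw [EReal.coe_le_coe_iff]
    have h1 : ∑ i, z i * (p i - ∑ j, rel ℓ j i.succ * p j) ≤ ∑ i, z i * x i := by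
      refine Finset.sum_le_sum fun i _ => mul_le_mul_of_nonneg_left ?_ (hz i)
      have := hf.1 i
      linarith
    have h2 : obj ℓ p - ∑ i, z i * x i
        ≤ obj ℓ p - ∑ i, z i * (p i - ∑ j, rel ℓ j i.succ * p j) := by linarith
    rw [key p] at h2
    exact h2.trans (Finset.sum_le_sum fun i _ => hterm p hf.2 i)
  · set p₀ : Fin d → ℝ := fun i => if 0 ≤ c i then pbar ℓ i else 0 with hp₀
    set x₀ : Fin d → ℝ := fun i => p₀ i - ∑ j, rel ℓ j i.succ * p₀ j with hx₀
    have hp₀b : ∀ i, 0 ≤ p₀ i ∧ p₀ i ≤ pbar ℓ i := by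
      intro i
      show (0 ≤ (if 0 ≤ c i then pbar ℓ i else 0)) ∧ (if 0 ≤ c i then pbar ℓ i else 0) ≤ pbar ℓ i
      by_cases h : 0 ≤ c i
      · rw [if_pos h]; exact ⟨(hpbar i).le, le_refl _⟩
      · rw [if_neg h]; exact ⟨le_refl _, (hpbar i).le⟩
    have hfeas : Feasible ℓ x₀ p₀ := by
      refine ⟨fun i => ?_, hp₀b⟩
      rw [hx₀]
      simp
    have hval : obj ℓ p₀ - ∑ i, z i * x₀ i
        = ∑ i, max (c i) 0 := by
      have := key p₀
      rw [hx₀]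
      rw [this]
      refine Finset.sum_congr rfl fun i _ => ?_
      show (if 0 ≤ c i then pbar ℓ i else 0) * (c i / pbar ℓ i) = max (c i) 0
      rcases le_or_gt 0 (c i) with h | h
      · rw [if_pos h, max_eq_left h, mul_comm, div_mul_cancel₀ _ (hpbar i).ne']
      · rw [if_neg (not_le.mpr h), max_eq_right h.le, zero_mul]
    refine le_iSup_of_le x₀ (le_iSup_of_le p₀ (le_iSup_of_le hfeas ?_))
    exact le_of_eq (by exact_mod_cast hval.symm)


end EisenbergNoe
end
end

section
/- In the Eisenberg–Noe model, for every x ∈ ℝ^d such that the linear program P(x) is feasible, every optimal solution p of P(x) is a clearing payment vector, i.e., p satisfies p_i = min{ p̄_i , x_i + Σ_{j=1}^d a_{ji} p_j } for every i ∈ {1,…,d}. -/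
open scoped ENNReal

noncomputable section

namespace EisenbergNoe

/-- In the Eisenberg–Noe model, for every state `x` for which the
linear program `P(x)` is feasible, every optimal solution of `P(x)` is a clearing
payment vector. -/
theorem eisenbergNoe_optimal_is_clearing
    (d : ℕ) (hd : 1 ≤ d) (ℓ : Fin (d + 1) → Fin (d + 1) → ℝ)
    (hℓnn : ∀ i j, 0 ≤ ℓ i j)
    (hsoc : ∀ i : Fin d, ℓ 0 i.succ = 0)
    (hto0 : ∀ i : Fin d, 0 < ℓ i.succ 0)
    (hself : ∀ i, ℓ i i = 0)
    (x : Fin d → ℝ) (p : Fin d → ℝ)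
    (hfeas : Feasible ℓ x p)
    (hopt : ∀ q : Fin d → ℝ, Feasible ℓ x q → obj ℓ q ≤ obj ℓ p) :
    ∀ i, p i = min (pbar ℓ i) (x i + ∑ j, rel ℓ j i.succ * p j) := by
  intro i
  have hpbar_pos : ∀ k : Fin d, 0 < pbar ℓ k := by
    intro k
    have h0 : (0 : Fin (d+1)) ∈ Finset.univ := Finset.mem_univ _
    have := Finset.single_le_sum (f := fun j => ℓ k.succ j)
      (fun j _ => hℓnn k.succ j) h0
    exact lt_of_lt_of_le (hto0 k) this
  have hrelnn : ∀ j : Fin d, ∀ m : Fin (d+1), 0 ≤ rel ℓ j m := by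
    intro j m
    exact div_nonneg (hℓnn _ _) (le_of_lt (hpbar_pos j))
  have hrelself : rel ℓ i i.succ = 0 := by
    unfold rel; rw [hself]; simp
  obtain ⟨hcon, hbd⟩ := hfeas
  set m := min (pbar ℓ i) (x i + ∑ j, rel ℓ j i.succ * p j) with hm
  have hle : p i ≤ m := le_min (hbd i).2 (hcon i)
  rcases eq_or_lt_of_le hle with h | hlt
  · exact h
  exfalso
  set q := Function.update p i m with hq
  have hqi : q i = m := Function.update_self i m p
  have hqj : ∀ j, j ≠ i → q j = p j := fun j hj => Function.update_of_ne hj m p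
  have hqge : ∀ j, p j ≤ q j := by
    intro j
    by_cases hji : j = i
    · subst hji; rw [hqi]; exact hle
    · rw [hqj j hji]
  have hsum_eq : ∀ k : Fin d, (∑ j, rel ℓ j i.succ * q j) = ∑ j, rel ℓ j i.succ * p j := by
    intro _
    apply Finset.sum_congr rfl
    intro j _
    by_cases hji : j = i
    · subst hji; rw [hrelself]; ring
    · rw [hqj j hji]
  have hqfeas : Feasible ℓ x q := by
    constructor
    · intro k
      by_cases hki : k = i
      · rw [hki, hqi, hsum_eq i]
        exact min_le_right _ _
      · rw [hqj k hki]
        refine (hcon k).trans ?_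
        gcongr with j _
        · exact hrelnn j k.succ
        · exact hqge j
    · intro k
      by_cases hki : k = i
      · rw [hki, hqi]
        exact ⟨le_of_lt (lt_of_le_of_lt (hbd i).1 hlt), min_le_left _ _⟩
      · rw [hqj k hki]; exact hbd k
  have hobjlt : obj ℓ p < obj ℓ q := by
    unfold obj
    apply Finset.sum_lt_sum
    · intro j _
      exact mul_le_mul_of_nonneg_left (hqge j) (hrelnn j 0)
    · refine ⟨i, Finset.mem_univ i, ?_⟩
      have : 0 < rel ℓ i 0 := div_pos (hto0 i) (hpbar_pos i)
      rw [hqi]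
      exact mul_lt_mul_of_pos_left hlt this
  exact absurd (hopt q hqfeas) (not_le_of_gt hobjlt)


end EisenbergNoe
end
end

section
/- Conjugate function of the network flow aggregation function: for every z = (z_{(a,b)})_{(a,b)∈E} ∈ ℝ^E_+, sup { Σ_{p∈P} u_p − Σ_{(a,b)∈E} z_{(a,b)} x_{(a,b)} : x ∈ ℝ^E, u ∈ ℝ^P, Σ_{p∈P : (a,b)∈p} u_p ≤ x_{(a,b)} for every (a,b) ∈ E } equals 0 if Σ_{(a,b)∈p} z_{(a,b)} = 1 for every p ∈ P, and equals +∞ otherwise. Equivalently, with Λ(x) := sup{ Σ_{p∈P} u_p : u ∈ ℝ^P, Σ_{p∈P : (a,b)∈p} u_p ≤ x_{(a,b)} for all (a,b) ∈ E }, one has sup_{x ∈ ℝ^E}( Λ(x) − zᵀx ) = 0 if every path p ∈ P satisfies Σ_{(a,b)∈p} z_{(a,b)} = 1, and +∞ otherwise. -/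
open scoped ENNReal BigOperators

noncomputable section

namespace NetworkFlow

/-- `L` is a simple path from `s` to `t` in the directed network with arc set `E`:
a nonempty list of consecutive arcs of `E` starting at `s`, ending at `t`, and
visiting no node more than once. -/
def IsSPath {N : Type*} [DecidableEq N] (E : Finset (N × N)) (s t : N)
    (L : List (N × N)) : Prop :=
  L ≠ [] ∧ (∀ e ∈ L, e ∈ E) ∧ L.head?.map Prod.fst = some s ∧
    L.getLast?.map Prod.snd = some t ∧
    L.Chain' (fun e f => e.2 = f.1) ∧ (L.map Prod.fst ++ [t]).Nodup

/-- The network flow aggregation function in path formulation: `Λ(x)` is the optimal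
value of `maximize ∑_{p ∈ P} u_p subject to ∑_{p ∈ P, (a,b) ∈ p} u_p ≤ x_{(a,b)}`
for all arcs `(a,b) ∈ E` (with value `⊥ = −∞` if infeasible). The (finite) sums over
the set `P` of simple paths are expressed with `finsum`. -/
def agg {N : Type*} [DecidableEq N] (E : Finset (N × N)) (s t : N)
    (x : N × N → ℝ) : EReal :=
  ⨆ (u : {L : List (N × N) // IsSPath E s t L} → ℝ)
    (_ : ∀ e ∈ E, (∑ᶠ (q : {L : List (N × N) // IsSPath E s t L}) (_ : e ∈ q.1), u q)
      ≤ x e),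
    ((∑ᶠ q : {L : List (N × N) // IsSPath E s t L}, u q : ℝ) : EReal)

section Aux

variable {N : Type*} [DecidableEq N] {E : Finset (N × N)} {s t : N}

lemma IsSPath.nodup {L : List (N × N)} (h : IsSPath E s t L) : L.Nodup :=
  ((List.nodup_append.mp h.2.2.2.2.2).1).of_map Prod.fst

lemma finiteP : Finite {L : List (N × N) // IsSPath E s t L} := by
  have hm : ∀ L : {L : List (N × N) // IsSPath E s t L}, ∀ e ∈ L.1, e ∈ E := fun L => L.2.2.1
  refine Finite.of_injective
    (fun L : {L : List (N × N) // IsSPath E s t L} =>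
      (⟨L.1.attachWith (· ∈ E) (hm L), by
        have := L.2.nodup
        rw [List.attachWith]
        exact this.pmap (fun a _ b _ h => congrArg Subtype.val h)⟩ :
        {l : List {e : N × N // e ∈ E} // l.Nodup})) ?_
  intro L M h
  have := congrArg (fun l => (Subtype.val l).map Subtype.val) h
  exact Subtype.ext (by simpa [List.attachWith_map_subtype_val, List.attach_map_subtype_val] using this)

lemma sum_filter_eq_pathsum (z : N × N → ℝ) {p : List (N × N)} (hp : IsSPath E s t p) :
    ∑ e ∈ E.filter (· ∈ p), z e = (p.map z).sum := by
  have h1 : E.filter (· ∈ p) = p.toFinset := by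
    ext e
    simp only [Finset.mem_filter, List.mem_toFinset]
    exact ⟨fun h => h.2, fun h => ⟨hp.2.1 e h, h⟩⟩
  rw [h1, List.sum_toFinset _ hp.nodup]

lemma finsum_cond_eq_filter [Fintype {L : List (N × N) // IsSPath E s t L}]
    (u : {L : List (N × N) // IsSPath E s t L} → ℝ) (e : N × N) :
    (∑ᶠ (q : {L : List (N × N) // IsSPath E s t L}) (_ : e ∈ q.1), u q)
      = ∑ q ∈ Finset.univ.filter (fun q : {L : List (N × N) // IsSPath E s t L} => e ∈ q.1),
          u q :=
  finsum_cond_eq_sum_of_cond_iff u (by intro q _; simp)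

/-- Weak duality. -/
lemma weak_duality [Fintype {L : List (N × N) // IsSPath E s t L}]
    (z : N × N → ℝ) (hz : ∀ e ∈ E, 0 ≤ z e)
    (h1 : ∀ L, IsSPath E s t L → (L.map z).sum = 1)
    (u : {L : List (N × N) // IsSPath E s t L} → ℝ) (x : N × N → ℝ)
    (hu : ∀ e ∈ E,
      (∑ q ∈ Finset.univ.filter
        (fun q : {L : List (N × N) // IsSPath E s t L} => e ∈ q.1), u q) ≤ x e) :
    (∑ q : {L : List (N × N) // IsSPath E s t L}, u q) ≤ ∑ e ∈ E, z e * x e := by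
  have key : (∑ q : {L : List (N × N) // IsSPath E s t L}, u q)
      = ∑ e ∈ E, z e * ∑ q ∈ Finset.univ.filter
          (fun q : {L : List (N × N) // IsSPath E s t L} => e ∈ q.1), u q := by
    calc (∑ q : {L : List (N × N) // IsSPath E s t L}, u q)
        = ∑ q : {L : List (N × N) // IsSPath E s t L},
            ∑ e ∈ E.filter (· ∈ q.1), z e * u q := by
          refine Finset.sum_congr rfl fun q _ => ?_
          rw [← Finset.sum_mul, sum_filter_eq_pathsum z q.2, h1 q.1 q.2, one_mul]
      _ = ∑ q : {L : List (N × N) // IsSPath E s t L}, ∑ e ∈ E,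
            if e ∈ q.1 then z e * u q else 0 := by
          refine Finset.sum_congr rfl fun q _ => ?_
          rw [Finset.sum_filter]
      _ = ∑ e ∈ E, ∑ q : {L : List (N × N) // IsSPath E s t L},
            if e ∈ q.1 then z e * u q else 0 := Finset.sum_comm
      _ = ∑ e ∈ E, z e * ∑ q ∈ Finset.univ.filter
            (fun q : {L : List (N × N) // IsSPath E s t L} => e ∈ q.1), u q := by
          refine Finset.sum_congr rfl fun e _ => ?_
          rw [Finset.mul_sum, ← Finset.sum_filter]
  rw [key]
  exact Finset.sum_le_sum fun e he => mul_le_mul_of_nonneg_left (hu e he) (hz e he)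

end Aux

/-- Conjugate function of the network flow aggregation function:
for `z ∈ ℝ^E_+`, `sup_x ( Λ(x) − zᵀx )` equals `0` if every simple path `p` from the
source to the sink satisfies `∑_{(a,b) ∈ p} z_{(a,b)} = 1`, and equals `+∞`
otherwise. -/
theorem networkFlow_conjugate
    {N : Type*} [DecidableEq N] (E : Finset (N × N)) (hE : E.Nonempty)
    (s t : N) (hst : t ≠ s)
    (hP : ∃ L, IsSPath E s t L)
    (z : N × N → ℝ) (hz : ∀ e ∈ E, 0 ≤ z e) :
    ((∀ L, IsSPath E s t L → (L.map z).sum = 1) →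
      (⨆ x : N × N → ℝ, (agg E s t x - ((∑ e ∈ E, z e * x e : ℝ) : EReal))) = 0) ∧
    (¬(∀ L, IsSPath E s t L → (L.map z).sum = 1) →
      (⨆ x : N × N → ℝ, (agg E s t x - ((∑ e ∈ E, z e * x e : ℝ) : EReal))) = ⊤) := by
  haveI : Finite {L : List (N × N) // IsSPath E s t L} := finiteP
  haveI : Fintype {L : List (N × N) // IsSPath E s t L} := Fintype.ofFinite _
  -- agg is at least the value of any single-path solution
  have hsingle : ∀ (p : {L : List (N × N) // IsSPath E s t L}) (c : ℝ),
      (c : EReal) ≤ agg E s t (fun e => if e ∈ p.1 then c else 0) := by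
    intro p c
    have hfeas : ∀ e ∈ E,
        (∑ᶠ (q : {L : List (N × N) // IsSPath E s t L}) (_ : e ∈ q.1),
          (if q = p then c else 0)) ≤ (if e ∈ p.1 then c else 0) := by
      intro e _
      rw [finsum_cond_eq_filter]
      rw [Finset.sum_ite_eq' _ p (fun _ => c)]
      simp
    have hval : (∑ᶠ q : {L : List (N × N) // IsSPath E s t L},
        (if q = p then c else 0) : ℝ) = c := by
      rw [finsum_eq_sum_of_fintype]
      simp [Finset.sum_ite_eq' Finset.univ p (fun _ => c)]
    calc (c : EReal) = ((∑ᶠ q : {L : List (N × N) // IsSPath E s t L},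
            (if q = p then c else 0) : ℝ) : EReal) := by rw [hval]
      _ ≤ _ := le_iSup₂ (f := fun u (_ : ∀ e ∈ E,
            (∑ᶠ (q : {L : List (N × N) // IsSPath E s t L}) (_ : e ∈ q.1), u q)
              ≤ (if e ∈ p.1 then c else 0)) =>
            ((∑ᶠ q : {L : List (N × N) // IsSPath E s t L}, u q : ℝ) : EReal))
            (fun q => if q = p then c else 0) hfeas
  -- value of the linear part at the single-path x
  have hlin : ∀ (p : {L : List (N × N) // IsSPath E s t L}) (c : ℝ),
      (∑ e ∈ E, z e * (if e ∈ p.1 then c else 0)) = (p.1.map z).sum * c := by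
    intro p c
    have : ∀ e ∈ E, z e * (if e ∈ p.1 then c else 0)
        = if e ∈ p.1 then z e * c else 0 := by
      intro e _; split <;> simp
    rw [Finset.sum_congr rfl this, ← Finset.sum_filter, ← Finset.sum_mul,
      sum_filter_eq_pathsum z p.2]
  constructor
  · intro h1
    apply le_antisymm
    · apply iSup_le
      intro x
      have hA : agg E s t x ≤ (((∑ e ∈ E, z e * x e : ℝ)) : EReal) := by
        apply iSup₂_le
        intro u hu
        apply EReal.coe_le_coe_iff.2
        rw [finsum_eq_sum_of_fintype]
        refine weak_duality z hz h1 u x fun e he => ?_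
        have := hu e he
        rwa [finsum_cond_eq_filter] at this
      calc agg E s t x - ((∑ e ∈ E, z e * x e : ℝ) : EReal)
          ≤ ((∑ e ∈ E, z e * x e : ℝ) : EReal) - ((∑ e ∈ E, z e * x e : ℝ) : EReal) :=
            EReal.sub_le_sub hA le_rfl
        _ = 0 := by rw [← EReal.coe_sub, sub_self, EReal.coe_zero]
    · obtain ⟨L, hL⟩ := hP
      refine le_iSup_of_le (fun e => if e ∈ L then (0:ℝ) else 0) ?_
      have h0 := hsingle ⟨L, hL⟩ 0
      simpa using h0
  · intro h2
    push_neg at h2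
    obtain ⟨p, hp, hσ⟩ := h2
    rw [iSup_eq_top]
    intro b hb
    obtain ⟨r, hbr, -⟩ := EReal.exists_between_coe_real hb
    set σ : ℝ := (p.map z).sum with hσdef
    have hne : (1 : ℝ) - σ ≠ 0 := fun h => hσ (by linarith [sub_eq_zero.mp h])
    set c : ℝ := r / (1 - σ) with hcdef
    refine ⟨fun e => if e ∈ p then c else 0, ?_⟩
    have h1 := hsingle ⟨p, hp⟩ c
    have h2 := hlin ⟨p, hp⟩ c
    have hterm : (r : EReal)
        ≤ agg E s t (fun e => if e ∈ p then c else 0)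
          - ((∑ e ∈ E, z e * (if e ∈ p then c else 0) : ℝ) : EReal) := by
      have : (r : EReal) = (c : EReal) - ((σ * c : ℝ) : EReal) := by
        rw [← EReal.coe_sub]
        congr 1
        rw [hcdef]
        field_simp
      rw [this, h2]
      exact EReal.sub_le_sub h1 le_rfl
    exact lt_of_lt_of_le hbr hterm


end NetworkFlow
end
end
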